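/- Let 0 < ζ < 1 and T^0 < T^l < T^u. The per-slot cooling decrement d(T^0) = (T^u − T^0)(1 − ζ^{K(T^0)})/K(T^0), where K(T^0) = log((T^l − T^0)/(T^u − T^0))/log ζ, is a strictly decreasing function of the ambient temperature T^0 on (−∞, T^l). -/

import Mathlib

theorem cooling_decrement_strict_anti
    (ζ Tl Tu : ℝ) (hζ0 : 0 < ζ) (hζ1 : ζ < 1) (hlu : Tl < Tu) :
    StrictAntiOn
      (fun T0 : ℝ =>
        (Tu - T0) * (1 - ζ ^ (Real.log ((Tl - T0) / (Tu - T0)) / Real.log ζ)) /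
          (Real.log ((Tl - T0) / (Tu - T0)) / Real.log ζ))
      (Set.Iio Tl) := by
  have hlogζ : Real.log ζ < 0 := Real.log_neg hζ0 hζ1
  have hlogζne : Real.log ζ ≠ 0 := ne_of_lt hlogζ
  -- pointwise simplification
  have key : ∀ T0 : ℝ, T0 < Tl →
      (Tu - T0) * (1 - ζ ^ (Real.log ((Tl - T0) / (Tu - T0)) / Real.log ζ)) /
          (Real.log ((Tl - T0) / (Tu - T0)) / Real.log ζ)
        = (Tu - Tl) * Real.log ζ / Real.log ((Tl - T0) / (Tu - T0)) := by
    intro T0 hT0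
    have hTu : (0:ℝ) < Tu - T0 := by linarith
    have hr0 : 0 < (Tl - T0) / (Tu - T0) := div_pos (by linarith) hTu
    have hpow : ζ ^ (Real.log ((Tl - T0) / (Tu - T0)) / Real.log ζ)
        = (Tl - T0) / (Tu - T0) := by
      rw [Real.rpow_def_of_pos hζ0, mul_comm, div_mul_cancel₀ _ hlogζne, Real.exp_log hr0]
    rw [hpow]
    have h1 : (Tu - T0) * (1 - (Tl - T0) / (Tu - T0)) = Tu - Tl := by
      field_simp
      ring
    rw [h1, div_div_eq_mul_div]
  intro x hx y hy hxy
  simp only [Set.mem_Iio] at hx hy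
  simp only [key x hx, key y hy]
  have hTux : (0:ℝ) < Tu - x := by linarith
  have hTuy : (0:ℝ) < Tu - y := by linarith
  have hrx0 : 0 < (Tl - x) / (Tu - x) := div_pos (by linarith) hTux
  have hry0 : 0 < (Tl - y) / (Tu - y) := div_pos (by linarith) hTuy
  have hrx1 : (Tl - x) / (Tu - x) < 1 := (div_lt_one hTux).mpr (by linarith)
  have hlt : (Tl - y) / (Tu - y) < (Tl - x) / (Tu - x) := by
    rw [div_lt_div_iff₀ hTuy hTux]
    nlinarith
  have hA : Real.log ((Tl - y) / (Tu - y)) < Real.log ((Tl - x) / (Tu - x)) :=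
    Real.log_lt_log hry0 hlt
  have hB : Real.log ((Tl - x) / (Tu - x)) < 0 := Real.log_neg hrx0 hrx1
  have hc : (Tu - Tl) * Real.log ζ < 0 :=
    mul_neg_of_pos_of_neg (by linarith) hlogζ
  set A := Real.log ((Tl - y) / (Tu - y))
  set B := Real.log ((Tl - x) / (Tu - x))
  set c := (Tu - Tl) * Real.log ζ
  have hAne : A ≠ 0 := ne_of_lt (lt_trans hA hB)
  have hBne : B ≠ 0 := ne_of_lt hB
  rw [show c / A = (-c) / (-A) by rw [neg_div_neg_eq],
     show c / B = (-c) / (-B) by rw [neg_div_neg_eq]]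
  exact div_lt_div_of_pos_left (by linarith) (by linarith) (by linarith)
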